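/- arXiv:1410.7012 — 3 statements merged into one kernel-verified Lean document; each statement's English description precedes it below -/
import Mathlib

section
/- Let L be a finite set of points in ℝ^d, ω : L → [0,∞) a weight assignment, and H ⊆ ℝ^d a k-dimensional affine subspace. For q ∈ L let q' denote the orthogonal projection of q onto H, and define ξ on the projected points by ξ(q')² = ω(q)² − ‖q − q'‖² + max_{x ∈ L} ‖x − x'‖². Then for every p ∈ L, the intersection Vor_ω(p) ∩ H equals the weighted Voronoi cell of p' inside H with weights ξ, i.e., Vor_ω(p) ∩ H = {x ∈ H : ‖x − p'‖² − ξ(p')² ≤ ‖x − q'‖² − ξ(q')² for all q ∈ L}. -/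
noncomputable section
open RealInnerProductSpace

/-- Weighted Voronoi cell of `p` among the points of `L`. -/
def vorCell {d : ℕ} (L : Finset (EuclideanSpace ℝ (Fin d))) (ω : EuclideanSpace ℝ (Fin d) → ℝ)
    (p : EuclideanSpace ℝ (Fin d)) : Set (EuclideanSpace ℝ (Fin d)) :=
  {x | ∀ q ∈ L, ‖x - p‖ ^ 2 - ω p ^ 2 ≤ ‖x - q‖ ^ 2 - ω q ^ 2}

/-- The restriction of a weighted Voronoi diagram to a `k`-flat `H` is the weighted Voronoi
diagram, inside `H`, of the projected points with the modified weights `ξ`. -/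
theorem restricted_voronoi_is_weighted_voronoi_in_flat
    (d k : ℕ) (L : Finset (EuclideanSpace ℝ (Fin d))) (hL : L.Nonempty)
    (ω : EuclideanSpace ℝ (Fin d) → ℝ) (hω : ∀ q ∈ L, 0 ≤ ω q)
    (H : AffineSubspace ℝ (EuclideanSpace ℝ (Fin d))) [Nonempty H]
    (hdim : Module.finrank ℝ H.direction = k)
    (proj : EuclideanSpace ℝ (Fin d) → EuclideanSpace ℝ (Fin d))
    (hproj : ∀ q, proj q = (EuclideanGeometry.orthogonalProjection H q : EuclideanSpace ℝ (Fin d)))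
    (ξsq : EuclideanSpace ℝ (Fin d) → ℝ)
    (hξsq : ∀ q, ξsq q = ω q ^ 2 - ‖q - proj q‖ ^ 2 + (L.sup' hL fun x => ‖x - proj x‖ ^ 2))
    (p : EuclideanSpace ℝ (Fin d)) (hp : p ∈ L) :
    vorCell L ω p ∩ (H : Set (EuclideanSpace ℝ (Fin d))) =
      {x | x ∈ H ∧ ∀ q ∈ L, ‖x - proj p‖ ^ 2 - ξsq p ≤ ‖x - proj q‖ ^ 2 - ξsq q} := by
  have key : ∀ x ∈ H, ∀ q : EuclideanSpace ℝ (Fin d),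
      ‖x - q‖ ^ 2 = ‖x - proj q‖ ^ 2 + ‖q - proj q‖ ^ 2 := by
    intro x hx q
    have hmem : proj q ∈ H := by
      rw [hproj]; exact (EuclideanGeometry.orthogonalProjection H q).2
    have h1 : x - proj q ∈ H.direction := by
      simpa using AffineSubspace.vsub_mem_direction hx hmem
    have h2 : q - proj q ∈ H.directionᗮ := by
      rw [hproj]
      simpa using EuclideanGeometry.vsub_orthogonalProjection_mem_direction_orthogonal H q
    have hinner : (inner ℝ (x - proj q) (q - proj q) : ℝ) = 0 :=
      by rw [real_inner_comm]; exact (Submodule.mem_orthogonal' _ _).1 h2 _ h1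
    have hxq : x - q = (x - proj q) - (q - proj q) := by abel
    rw [hxq, norm_sub_sq_real, hinner]
    ring
  ext x
  simp only [Set.mem_inter_iff, Set.mem_setOf_eq, vorCell, SetLike.mem_coe]
  constructor
  · rintro ⟨hv, hxH⟩
    refine ⟨hxH, fun q hq => ?_⟩
    have := hv q hq
    rw [key x hxH p, key x hxH q, hξsq p, hξsq q] at *
    linarith
  · rintro ⟨hxH, hv⟩
    refine ⟨fun q hq => ?_, hxH⟩
    have := hv q hq
    rw [key x hxH p, key x hxH q]
    rw [hξsq p, hξsq q] at this
    linarith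
end
end

section
/- Let L be a finite set of points in ℝ^d, ω : L → [0,∞) a weight assignment, H ⊆ ℝ^d a k-dimensional affine subspace, and p ∈ L a point such that Vor_ω(p) ∩ H is nonempty and bounded. Then there exists a simplex σ ⊆ L containing p with cardinality at least k + 1 such that Vor_ω(σ) ∩ H ≠ ∅; that is, the maximal simplices incident to p in the restricted Delaunay complex Del_ω(L, H) = {σ ⊆ L : Vor_ω(σ) ∩ H ≠ ∅} have dimension at least k. -/
noncomputable section

/-- Weighted Voronoi face of a simplex `σ`. -/
def vorFace {d : ℕ} (L : Finset (EuclideanSpace ℝ (Fin d))) (ω : EuclideanSpace ℝ (Fin d) → ℝ)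
    (σ : Finset (EuclideanSpace ℝ (Fin d))) : Set (EuclideanSpace ℝ (Fin d)) :=
  ⋂ p ∈ σ, vorCell L ω p

open Finset
open scoped Classical

namespace DelAux

variable {d : ℕ}

def g (ω : EuclideanSpace ℝ (Fin d) → ℝ) (p q x : EuclideanSpace ℝ (Fin d)) : ℝ :=
  2 * (inner ℝ x (p - q) : ℝ) + (‖q‖ ^ 2 - ‖p‖ ^ 2 - ω q ^ 2 + ω p ^ 2)

lemma g_eq (ω : EuclideanSpace ℝ (Fin d) → ℝ) (p q x : EuclideanSpace ℝ (Fin d)) :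
    (‖x - q‖ ^ 2 - ω q ^ 2) - (‖x - p‖ ^ 2 - ω p ^ 2) = g ω p q x := by
  simp only [g, norm_sub_sq_real, inner_sub_right]
  ring

lemma g_self (ω : EuclideanSpace ℝ (Fin d) → ℝ) (p x : EuclideanSpace ℝ (Fin d)) :
    g ω p p x = 0 := by simp [g]

lemma mem_vorCell_iff {L : Finset (EuclideanSpace ℝ (Fin d))} {ω : EuclideanSpace ℝ (Fin d) → ℝ}
    {p x : EuclideanSpace ℝ (Fin d)} :
    x ∈ vorCell L ω p ↔ ∀ q ∈ L, 0 ≤ g ω p q x := by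
  unfold vorCell
  simp only [Set.mem_setOf_eq]
  refine forall₂_congr fun q hq => ?_
  rw [← g_eq ω p q x, ← sub_nonneg]

lemma g_add_smul (ω : EuclideanSpace ℝ (Fin d) → ℝ) (p q x v : EuclideanSpace ℝ (Fin d)) (t : ℝ) :
    g ω p q (x + t • v) = g ω p q x + 2 * t * (inner ℝ v (p - q) : ℝ) := by
  simp only [g, inner_add_left, real_inner_smul_left]
  ring

end DelAux

namespace DelAux2
open DelAux

variable {d k : ℕ}

lemma grow (L : Finset (EuclideanSpace ℝ (Fin d))) (ω : EuclideanSpace ℝ (Fin d) → ℝ)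
    (H : AffineSubspace ℝ (EuclideanSpace ℝ (Fin d)))
    (hdim : Module.finrank ℝ H.direction = k)
    (p : EuclideanSpace ℝ (Fin d)) (hp : p ∈ L)
    (hbdd : Bornology.IsBounded (vorCell L ω p ∩ (H : Set (EuclideanSpace ℝ (Fin d)))))
    (x : EuclideanSpace ℝ (Fin d)) (hx : x ∈ vorCell L ω p ∩ (H : Set (EuclideanSpace ℝ (Fin d))))
    (hcard : (L.filter fun q => g ω p q x = 0).card ≤ k) :
    ∃ x' ∈ vorCell L ω p ∩ (H : Set (EuclideanSpace ℝ (Fin d))),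
      (L.filter fun q => g ω p q x = 0) ⊂ (L.filter fun q => g ω p q x' = 0) := by
  classical
  set σx := L.filter fun q => g ω p q x = 0 with hσx
  have hpσ : p ∈ σx := mem_filter.2 ⟨hp, g_self ω p x⟩
  set σ' := σx.erase p with hσ'
  have hσ'card : σ'.card < k := by
    have h1 : σ'.card = σx.card - 1 := card_erase_of_mem hpσ
    have h2 : 1 ≤ σx.card := card_pos.2 ⟨p, hpσ⟩
    omega
  -- the linear map of active constraints
  let φ : H.direction →ₗ[ℝ] (↥σ' → ℝ) :=
    LinearMap.pi fun q : ↥σ' =>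
      ((innerSL ℝ (p - (q : EuclideanSpace ℝ (Fin d)))).toLinearMap).comp H.direction.subtype
  have hnotinj : ¬ Function.Injective φ := by
    intro hinj
    have h1 := LinearMap.finrank_le_finrank_of_injective hinj
    have h2 : Module.finrank ℝ (↥σ' → ℝ) = σ'.card := by
      rw [Module.finrank_pi]; exact Fintype.card_coe σ'
    rw [hdim, h2] at h1
    omega
  rw [← LinearMap.ker_eq_bot] at hnotinj
  obtain ⟨v, hvker, hv0⟩ := Submodule.exists_mem_ne_zero_of_ne_bot hnotinj
  have hv : ∀ q ∈ σx, (inner ℝ ((v : EuclideanSpace ℝ (Fin d)))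
      (p - q) : ℝ) = 0 := by
    intro q hq
    by_cases hqp : q = p
    · simp [hqp]
    · have hqσ' : q ∈ σ' := mem_erase.2 ⟨hqp, hq⟩
      have := congrFun (LinearMap.mem_ker.1 hvker) ⟨q, hqσ'⟩
      simp only [φ, LinearMap.pi_apply, LinearMap.coe_comp, Function.comp_apply,
        Submodule.coe_subtype, ContinuousLinearMap.coe_coe, innerSL_apply_apply,
        Pi.zero_apply] at this
      rw [real_inner_comm]
      exact this
  obtain ⟨C, hC⟩ := Bornology.IsBounded.exists_norm_le hbdd
  have hvE0 : (v : EuclideanSpace ℝ (Fin d)) ≠ 0 := by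
    simpa using hv0
  have hvnorm : 0 < ‖(v : EuclideanSpace ℝ (Fin d))‖ := norm_pos_iff.2 hvE0
  have hmemH : ∀ t : ℝ, x + t • (v : EuclideanSpace ℝ (Fin d)) ∈ H := by
    intro t
    have h1 : t • (v : EuclideanSpace ℝ (Fin d)) ∈ H.direction :=
      Submodule.smul_mem _ t v.2
    have := AffineSubspace.vadd_mem_of_mem_direction h1 hx.2
    simpa [vadd_eq_add, add_comm] using this
  -- there is a constraint decreasing along v
  have hex : ∃ q ∈ L, (inner ℝ ((v : EuclideanSpace ℝ (Fin d))) (p - q) : ℝ) < 0 := by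
    by_contra hcon
    push_neg at hcon
    have hmem : ∀ t : ℝ, 0 ≤ t →
        x + t • (v : EuclideanSpace ℝ (Fin d)) ∈ vorCell L ω p ∩ (H : Set (EuclideanSpace ℝ (Fin d))) := by
      intro t ht
      refine ⟨mem_vorCell_iff.2 fun q hq => ?_, hmemH t⟩
      rw [g_add_smul]
      have h1 := mem_vorCell_iff.1 hx.1 q hq
      have h2 := hcon q hq
      nlinarith
    have hCx : ‖x‖ ≤ C := hC x hx
    set t : ℝ := (C + ‖x‖ + 1) / ‖(v : EuclideanSpace ℝ (Fin d))‖ with htdef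
    have ht : 0 ≤ t := by
      apply div_nonneg _ hvnorm.le
      linarith [norm_nonneg x]
    have h3 := hC _ (hmem t ht)
    have h4 : ‖t • (v : EuclideanSpace ℝ (Fin d))‖ = C + ‖x‖ + 1 := by
      rw [norm_smul, Real.norm_of_nonneg ht, htdef]
      field_simp
    have h5 : ‖t • (v : EuclideanSpace ℝ (Fin d))‖ ≤
        ‖x + t • (v : EuclideanSpace ℝ (Fin d))‖ + ‖x‖ := by
      have := norm_sub_le (x + t • (v : EuclideanSpace ℝ (Fin d))) x
      simpa using this
    linarith
  -- pick the first constraint that becomes tight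
  set A := L.filter fun q => (inner ℝ ((v : EuclideanSpace ℝ (Fin d))) (p - q) : ℝ) < 0 with hA
  have hAne : A.Nonempty := by
    obtain ⟨q, hqL, hqlt⟩ := hex
    exact ⟨q, mem_filter.2 ⟨hqL, hqlt⟩⟩
  set tf : EuclideanSpace ℝ (Fin d) → ℝ := fun q =>
    g ω p q x / (-(2 * (inner ℝ ((v : EuclideanSpace ℝ (Fin d))) (p - q) : ℝ))) with htf
  obtain ⟨q0, hq0A, hq0min⟩ := A.exists_min_image tf hAne
  have hq0L : q0 ∈ L := (mem_filter.1 hq0A).1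
  have hq0lt : (inner ℝ ((v : EuclideanSpace ℝ (Fin d))) (p - q0) : ℝ) < 0 :=
    (mem_filter.1 hq0A).2
  have ht0 : 0 ≤ tf q0 := by
    apply div_nonneg (mem_vorCell_iff.1 hx.1 q0 hq0L)
    linarith
  set x' := x + tf q0 • (v : EuclideanSpace ℝ (Fin d)) with hx'
  have hgx' : ∀ q ∈ L, 0 ≤ g ω p q x' := by
    intro q hq
    rw [hx', g_add_smul]
    have h1 := mem_vorCell_iff.1 hx.1 q hq
    rcases lt_or_ge (inner ℝ ((v : EuclideanSpace ℝ (Fin d))) (p - q) : ℝ) 0 with hlt | hge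
    · have hqA : q ∈ A := mem_filter.2 ⟨hq, hlt⟩
      have h2 := hq0min q hqA
      have h3 : tf q0 * (-(2 * (inner ℝ ((v : EuclideanSpace ℝ (Fin d))) (p - q) : ℝ))) ≤
          g ω p q x :=
        (le_div_iff₀ (show (0:ℝ) < -(2 * (inner ℝ ((v : EuclideanSpace ℝ (Fin d))) (p - q) : ℝ))
          by linarith)).1 h2
      nlinarith
    · nlinarith
  have hq0tight : g ω p q0 x' = 0 := by
    rw [hx', g_add_smul]
    have hden : (-(2 * (inner ℝ ((v : EuclideanSpace ℝ (Fin d))) (p - q0) : ℝ))) ≠ 0 :=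
      ne_of_gt (by linarith)
    have h4 : tf q0 * (-(2 * (inner ℝ ((v : EuclideanSpace ℝ (Fin d))) (p - q0) : ℝ))) =
        g ω p q0 x := div_mul_cancel₀ _ hden
    nlinarith
  have hx'mem : x' ∈ vorCell L ω p ∩ (H : Set (EuclideanSpace ℝ (Fin d))) :=
    ⟨mem_vorCell_iff.2 hgx', hmemH _⟩
  refine ⟨x', hx'mem, ?_⟩
  rw [Finset.ssubset_iff_of_subset]
  · refine ⟨q0, mem_filter.2 ⟨hq0L, hq0tight⟩, ?_⟩
    intro hq0σ
    have := hv q0 hq0σ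
    linarith
  · intro q hq
    have hqL := (mem_filter.1 hq).1
    have hq0 : g ω p q x = 0 := (mem_filter.1 hq).2
    refine mem_filter.2 ⟨hqL, ?_⟩
    rw [hx', g_add_smul, hq0, hv q hq]
    ring

lemma reach (L : Finset (EuclideanSpace ℝ (Fin d))) (ω : EuclideanSpace ℝ (Fin d) → ℝ)
    (H : AffineSubspace ℝ (EuclideanSpace ℝ (Fin d)))
    (hdim : Module.finrank ℝ H.direction = k)
    (p : EuclideanSpace ℝ (Fin d)) (hp : p ∈ L)
    (hbdd : Bornology.IsBounded (vorCell L ω p ∩ (H : Set (EuclideanSpace ℝ (Fin d))))) :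
    ∀ n : ℕ, ∀ x ∈ vorCell L ω p ∩ (H : Set (EuclideanSpace ℝ (Fin d))),
      L.card ≤ (L.filter fun q => g ω p q x = 0).card + n →
      ∃ x' ∈ vorCell L ω p ∩ (H : Set (EuclideanSpace ℝ (Fin d))),
        k + 1 ≤ (L.filter fun q => g ω p q x' = 0).card := by
  classical
  intro n
  induction n with
  | zero =>
    intro x hx hn
    rcases le_or_gt (k+1) (L.filter fun q => g ω p q x = 0).card with h | h
    · exact ⟨x, hx, h⟩
    · obtain ⟨x', hx', hss⟩ := grow L ω H hdim p hp hbdd x hx (by omega)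
      have h1 := card_lt_card hss
      have h2 := card_le_card (filter_subset (fun q => g ω p q x' = 0) L)
      omega
  | succ n ih =>
    intro x hx hn
    rcases le_or_gt (k+1) (L.filter fun q => g ω p q x = 0).card with h | h
    · exact ⟨x, hx, h⟩
    · obtain ⟨x', hx', hss⟩ := grow L ω H hdim p hp hbdd x hx (by omega)
      have h1 := card_lt_card hss
      exact ih x' hx' (by omega)

end DelAux2

/-- If `Vor_ω(p) ∩ H` is nonempty and bounded for a `k`-flat `H`, then some simplex of the
restricted Delaunay complex `Del_ω(L, H)` incident to `p` has dimension at least `k`. -/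
theorem maximal_simplex_dim_in_restricted_delaunay
    (d k : ℕ) (L : Finset (EuclideanSpace ℝ (Fin d)))
    (ω : EuclideanSpace ℝ (Fin d) → ℝ) (hω : ∀ q ∈ L, 0 ≤ ω q)
    (H : AffineSubspace ℝ (EuclideanSpace ℝ (Fin d)))
    (hdim : Module.finrank ℝ H.direction = k)
    (p : EuclideanSpace ℝ (Fin d)) (hp : p ∈ L)
    (hne : (vorCell L ω p ∩ (H : Set (EuclideanSpace ℝ (Fin d)))).Nonempty)
    (hbdd : Bornology.IsBounded (vorCell L ω p ∩ (H : Set (EuclideanSpace ℝ (Fin d))))) :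
    ∃ σ : Finset (EuclideanSpace ℝ (Fin d)), σ ⊆ L ∧ p ∈ σ ∧ k + 1 ≤ σ.card ∧
      (vorFace L ω σ ∩ (H : Set (EuclideanSpace ℝ (Fin d)))).Nonempty := by
  classical
  obtain ⟨x, hx⟩ := hne
  obtain ⟨x', hx', hcard'⟩ :=
    DelAux2.reach L ω H hdim p hp hbdd L.card x hx (by omega)
  refine ⟨L.filter fun q => DelAux.g ω p q x' = 0, filter_subset _ _,
    mem_filter.2 ⟨hp, DelAux.g_self ω p x'⟩, hcard', ⟨x', ?_, hx'.2⟩⟩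
  rw [vorFace, Set.mem_iInter₂]
  intro q hq
  have hqL := (Finset.mem_filter.1 hq).1
  have hg0 := (Finset.mem_filter.1 hq).2
  simp only [vorCell, Set.mem_setOf_eq]
  intro r hr
  have h1 := DelAux.mem_vorCell_iff.1 hx'.1 r hr
  have e1 := DelAux.g_eq ω p q x'
  have e2 := DelAux.g_eq ω p r x'
  linarith
end
end

section
/- Let L be a finite subset of ℝ^d, W ⊆ ℝ^d, and ω : L → [0,∞) a weight assignment. Suppose σ ⊆ L is a simplex such that every nonempty subset τ ⊆ σ has an ω-witness in W, i.e., there exists w ∈ W with ‖w − p‖² − ω(p)² ≤ ‖w − q‖² − ω(q)² for all p ∈ τ and all q ∈ L∖τ. Then the weighted Voronoi face Vor_ω(σ) is nonempty (so σ belongs to the weighted Delaunay complex Del_ω(L)); moreover, Vor_ω(σ) intersects the convex hull of the set of ω-witnesses of σ and of its subsimplices. -/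
noncomputable section

/-- `w` is an `ω`-witness of the simplex `τ ⊆ L`. -/
def isWitness {d : ℕ} (L : Finset (EuclideanSpace ℝ (Fin d))) (ω : EuclideanSpace ℝ (Fin d) → ℝ)
    (w : EuclideanSpace ℝ (Fin d)) (τ : Finset (EuclideanSpace ℝ (Fin d))) : Prop :=
  ∀ p ∈ τ, ∀ q ∈ L, q ∉ τ → ‖w - p‖ ^ 2 - ω p ^ 2 ≤ ‖w - q‖ ^ 2 - ω q ^ 2

/-- Power distance (as a function of the site `r`). -/
def pf {d : ℕ} (ω : EuclideanSpace ℝ (Fin d) → ℝ) (r x : EuclideanSpace ℝ (Fin d)) : ℝ :=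
  ‖x - r‖ ^ 2 - ω r ^ 2

lemma pf_sub_affine {d : ℕ} (ω : EuclideanSpace ℝ (Fin d) → ℝ)
    (p q x y : EuclideanSpace ℝ (Fin d)) {a b : ℝ} (hab : a + b = 1) :
    pf ω p (a • x + b • y) - pf ω q (a • x + b • y)
      = a * (pf ω p x - pf ω q x) + b * (pf ω p y - pf ω q y) := by
  have hb : b = 1 - a := by linarith
  subst hb
  simp only [pf, norm_sub_sq_real, inner_add_left, real_inner_smul_left]
  ring

lemma pf_continuous {d : ℕ} (ω : EuclideanSpace ℝ (Fin d) → ℝ) (r : EuclideanSpace ℝ (Fin d)) :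
    Continuous fun x : EuclideanSpace ℝ (Fin d) => pf ω r x := by
  simp only [pf]
  exact (((continuous_id.sub continuous_const).norm).pow 2).sub continuous_const

/-- The core separation argument. -/
theorem aux_main (d : ℕ) (L : Finset (EuclideanSpace ℝ (Fin d)))
    (ω : EuclideanSpace ℝ (Fin d) → ℝ)
    (σ : Finset (EuclideanSpace ℝ (Fin d))) (hσL : σ ⊆ L) (hσne : σ.Nonempty)
    (w! : Finset (EuclideanSpace ℝ (Fin d)) → EuclideanSpace ℝ (Fin d))
    (hw! : ∀ τ, τ ⊆ σ → τ.Nonempty → isWitness L ω (w! τ) τ) :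
    ∃ x ∈ convexHull ℝ
        (w! '' {τ : Finset (EuclideanSpace ℝ (Fin d)) | τ ⊆ σ ∧ τ.Nonempty}),
      ∀ p ∈ σ, ∀ q ∈ L, pf ω p x ≤ pf ω q x := by
  classical
  set T : Set (EuclideanSpace ℝ (Fin d)) :=
    w! '' {τ : Finset (EuclideanSpace ℝ (Fin d)) | τ ⊆ σ ∧ τ.Nonempty} with hT
  have hTfin : T.Finite := by
    apply Set.Finite.image
    apply Set.Finite.subset σ.powerset.finite_toSet
    intro τ hτ
    simp only [Set.mem_setOf_eq] at hτ
    simp [Finset.mem_powerset, hτ.1]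
  set K : Set (EuclideanSpace ℝ (Fin d)) := convexHull ℝ T with hK
  have hmemK : ∀ τ, τ ⊆ σ → τ.Nonempty → w! τ ∈ K := by
    intro τ h1 h2
    apply subset_convexHull
    exact ⟨τ, ⟨h1, h2⟩, rfl⟩
  have hKcvx : Convex ℝ K := convex_convexHull ℝ _
  have hKcp : IsCompact K := hTfin.isCompact_convexHull (𝕜 := ℝ)
  -- the affine constraint map
  set Φ : EuclideanSpace ℝ (Fin d) → ({p // p ∈ σ} × {q // q ∈ L}) → ℝ :=
    fun x i => pf ω i.1.1 x - pf ω i.2.1 x with hΦ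
  have hΦcont : Continuous Φ :=
    continuous_pi fun i => (pf_continuous ω i.1.1).sub (pf_continuous ω i.2.1)
  have hΦaff : ∀ (a b : ℝ), a + b = 1 →
      ∀ x y, Φ (a • x + b • y) = a • Φ x + b • Φ y := by
    intro a b hab x y
    funext i
    simp only [hΦ, Pi.add_apply, Pi.smul_apply, smul_eq_mul]
    exact pf_sub_affine ω _ _ x y hab
  have hscvx : Convex ℝ (Φ '' K) := by
    rintro _ ⟨x, hx, rfl⟩ _ ⟨y, hy, rfl⟩ a b ha hb hab
    exact ⟨a • x + b • y, hKcvx hx hy ha hb hab, (hΦaff a b hab x y)⟩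
  have hscp : IsCompact (Φ '' K) := hKcp.image hΦcont
  set Ort : Set (({p // p ∈ σ} × {q // q ∈ L}) → ℝ) := {v | ∀ i, v i ≤ 0} with hOrt
  have hOrtc : IsClosed Ort := by
    have h : Ort = ⋂ i, {v : ({p // p ∈ σ} × {q // q ∈ L}) → ℝ | v i ≤ 0} := by
      ext v; simp [hOrt, Set.mem_iInter]
    rw [h]
    exact isClosed_iInter fun i => isClosed_le (continuous_apply i) continuous_const
  have hOrtcvx : Convex ℝ Ort := by
    intro v hv w hw a b ha hb hab
    simp only [hOrt, Set.mem_setOf_eq] at hv hw ⊢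
    intro i
    have h1 : (a • v + b • w) i = a * v i + b * w i := rfl
    rw [h1]
    nlinarith [hv i, hw i]
  have hmain : ¬ Disjoint (Φ '' K) Ort := by
    intro hdisj
    obtain ⟨g, u, v, hgu, huv, hOrtv⟩ :=
      geometric_hahn_banach_compact_closed hscvx hscp hOrtcvx hOrtc hdisj
    have hv0 : v < 0 := by
      have h0 : (0 : ({p // p ∈ σ} × {q // q ∈ L}) → ℝ) ∈ Ort := by
        simp only [hOrt, Set.mem_setOf_eq]; intro i; simp
      have := hOrtv 0 h0
      simpa using this
    have hμ : ∀ i, g (Pi.single i (1:ℝ)) ≤ 0 := by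
      intro i
      by_contra hpos
      push_neg at hpos
      set μi : ℝ := g (Pi.single i (1:ℝ)) with hμi
      set t : ℝ := (μi - v) / μi with ht
      have htpos : 0 ≤ t := div_nonneg (by linarith) hpos.le
      have hbOrt : (-(t • (Pi.single i (1:ℝ) : ({p // p ∈ σ} × {q // q ∈ L}) → ℝ))) ∈ Ort := by
        simp only [hOrt, Set.mem_setOf_eq]
        intro j
        simp only [Pi.neg_apply, Pi.smul_apply, smul_eq_mul, neg_nonpos]
        rcases eq_or_ne j i with h | h
        · subst h; simp [Pi.single_eq_same]; exact htpos
        · simp [Pi.single_eq_of_ne h]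
      have hgb : g (-(t • (Pi.single i (1:ℝ) : ({p // p ∈ σ} × {q // q ∈ L}) → ℝ))) = -(t * μi) := by
        rw [map_neg, map_smul, smul_eq_mul, hμi]
      have hlt := hOrtv _ hbOrt
      rw [hgb] at hlt
      have htm : t * μi = μi - v := div_mul_cancel₀ _ (ne_of_gt hpos)
      rw [htm] at hlt
      linarith
    have hrepr : ∀ y : ({p // p ∈ σ} × {q // q ∈ L}) → ℝ,
        g y = ∑ i, y i * g (Pi.single i (1:ℝ)) := by
      intro y
      have h1 : y = ∑ i, Pi.single i (y i) := (Finset.univ_sum_single y).symm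
      calc g y = g (∑ i, Pi.single i (y i)) := by rw [← h1]
        _ = ∑ i, g (Pi.single i (y i)) := map_sum g _ _
        _ = ∑ i, y i * g (Pi.single i (1:ℝ)) := by
            refine Finset.sum_congr rfl fun i _ => ?_
            have h2 : Pi.single i (y i)
                = y i • (Pi.single i (1:ℝ) : ({p // p ∈ σ} × {q // q ∈ L}) → ℝ) := by
              rw [← Pi.single_smul, smul_eq_mul, mul_one]
            rw [h2, map_smul, smul_eq_mul]
    have hKneg : ∀ x ∈ K, ∑ i, Φ x i * g (Pi.single i (1:ℝ)) < 0 := by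
      intro x hx
      have h := hgu (Φ x) ⟨x, hx, rfl⟩
      rw [hrepr] at h
      linarith
    -- the combined coefficients
    set N : EuclideanSpace ℝ (Fin d) → EuclideanSpace ℝ (Fin d) → ℝ :=
      fun p q => if h : p ∈ σ ∧ q ∈ L then
        -(g (Pi.single ((⟨p, h.1⟩ : {p // p ∈ σ}), (⟨q, h.2⟩ : {q // q ∈ L})) (1:ℝ))) else 0
      with hN
    have hNnn : ∀ p q, 0 ≤ N p q := by
      intro p q
      simp only [hN]
      split
      · next h => linarith [hμ ((⟨p, h.1⟩ : {p // p ∈ σ}), (⟨q, h.2⟩ : {q // q ∈ L}))]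
      · exact le_refl 0
    have hN1 : ∀ p q, p ∉ σ → N p q = 0 := by
      intro p q hp
      simp only [hN]
      rw [dif_neg]
      tauto
    have hNval : ∀ i : {p // p ∈ σ} × {q // q ∈ L},
        N i.1.1 i.2.1 = -(g (Pi.single i (1:ℝ))) := by
      rintro ⟨⟨p, hp⟩, ⟨q, hq⟩⟩
      simp only [hN]
      rw [dif_pos ⟨hp, hq⟩]
    have hposum : ∀ x ∈ K, 0 < ∑ p ∈ σ, ∑ q ∈ L, N p q * (pf ω p x - pf ω q x) := by
      intro x hx
      have heq : ∑ p ∈ σ, ∑ q ∈ L, N p q * (pf ω p x - pf ω q x)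
          = ∑ i : {p // p ∈ σ} × {q // q ∈ L}, N i.1.1 i.2.1 * (pf ω i.1.1 x - pf ω i.2.1 x) := by
        rw [Fintype.sum_prod_type]
        rw [← Finset.sum_coe_sort σ (fun p => ∑ q ∈ L, N p q * (pf ω p x - pf ω q x))]
        refine Finset.sum_congr rfl fun p _ => ?_
        rw [← Finset.sum_coe_sort L (fun q => N (↑p) q * (pf ω (↑p) x - pf ω q x))]
      have h2 : ∑ i : {p // p ∈ σ} × {q // q ∈ L}, N i.1.1 i.2.1 * (pf ω i.1.1 x - pf ω i.2.1 x)
          = -∑ i, Φ x i * g (Pi.single i (1:ℝ)) := by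
        rw [← Finset.sum_neg_distrib]
        refine Finset.sum_congr rfl fun i _ => ?_
        rw [hNval i]
        simp only [hΦ]
        ring
      rw [heq, h2]
      linarith [hKneg x hx]
    set c : EuclideanSpace ℝ (Fin d) → ℝ :=
      fun r => (∑ q ∈ L, N r q) - ∑ p ∈ σ, N p r with hc
    have hcrepr : ∀ x, ∑ p ∈ σ, ∑ q ∈ L, N p q * (pf ω p x - pf ω q x)
        = ∑ r ∈ L, c r * pf ω r x := by
      intro x
      have h1 : ∑ p ∈ σ, ∑ q ∈ L, N p q * (pf ω p x - pf ω q x)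
          = (∑ p ∈ σ, (∑ q ∈ L, N p q) * pf ω p x) - ∑ p ∈ σ, ∑ q ∈ L, N p q * pf ω q x := by
        rw [← Finset.sum_sub_distrib]
        refine Finset.sum_congr rfl fun p _ => ?_
        rw [Finset.sum_mul, ← Finset.sum_sub_distrib]
        exact Finset.sum_congr rfl fun q _ => by ring
      have h2 : ∑ p ∈ σ, (∑ q ∈ L, N p q) * pf ω p x
          = ∑ r ∈ L, (∑ q ∈ L, N r q) * pf ω r x := by
        apply Finset.sum_subset hσL
        intro r _ hrσ
        rw [Finset.sum_eq_zero fun q _ => hN1 r q hrσ, zero_mul]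
      have h3 : ∑ p ∈ σ, ∑ q ∈ L, N p q * pf ω q x
          = ∑ q ∈ L, (∑ p ∈ σ, N p q) * pf ω q x := by
        rw [Finset.sum_comm]
        exact Finset.sum_congr rfl fun q _ => (Finset.sum_mul _ _ _).symm
      rw [h1, h2, h3, ← Finset.sum_sub_distrib]
      exact Finset.sum_congr rfl fun r _ => by simp only [hc]; ring
    have hcsum : ∑ r ∈ L, c r = 0 := by
      have h2 : ∑ r ∈ L, ∑ q ∈ L, N r q = ∑ p ∈ σ, ∑ q ∈ L, N p q := by
        symm
        apply Finset.sum_subset hσL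
        intro r _ hrσ
        exact Finset.sum_eq_zero fun q _ => hN1 r q hrσ
      have h3 : ∑ r ∈ L, ∑ p ∈ σ, N p r = ∑ p ∈ σ, ∑ q ∈ L, N p q := Finset.sum_comm
      simp only [hc, Finset.sum_sub_distrib, h2, h3, sub_self]
    have hcout : ∀ r ∈ L, r ∉ σ → c r ≤ 0 := by
      intro r _ hrσ
      simp only [hc]
      have h : ∑ q ∈ L, N r q = 0 := Finset.sum_eq_zero fun q _ => hN1 r q hrσ
      rw [h, zero_sub, neg_nonpos]
      exact Finset.sum_nonneg fun p _ => hNnn p r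
    set τ : Finset (EuclideanSpace ℝ (Fin d)) := L.filter (fun r => 0 < c r) with hτ
    have hτσ : τ ⊆ σ := by
      intro r hr
      rw [hτ, Finset.mem_filter] at hr
      by_contra hrσ
      linarith [hcout r hr.1 hrσ]
    rcases Finset.eq_empty_or_nonempty τ with hτe | hτne
    · have hall : ∀ r ∈ L, c r ≤ 0 := by
        intro r hr
        by_contra h
        push_neg at h
        have : r ∈ τ := by rw [hτ, Finset.mem_filter]; exact ⟨hr, h⟩
        simp [hτe] at this
      have hzero : ∀ r ∈ L, c r = 0 := (Finset.sum_eq_zero_iff_of_nonpos hall).mp hcsum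
      have hx := hposum (w! σ) (hmemK σ Finset.Subset.rfl hσne)
      rw [hcrepr] at hx
      rw [Finset.sum_eq_zero (fun r hr => by rw [hzero r hr, zero_mul])] at hx
      exact lt_irrefl 0 hx
    · have hwK : w! τ ∈ K := hmemK τ hτσ hτne
      have hwitτ := hw! τ hτσ hτne
      obtain ⟨pstar, hpstar, hmax⟩ := τ.exists_max_image (fun p => pf ω p (w! τ)) hτne
      have key : ∀ r ∈ L, c r * (pf ω r (w! τ) - pf ω pstar (w! τ)) ≤ 0 := by
        intro r hrL
        rcases lt_trichotomy (c r) 0 with h | h | h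
        · have hrτ : r ∉ τ := by
            intro hrt
            rw [hτ, Finset.mem_filter] at hrt
            linarith [hrt.2]
          have hle : pf ω pstar (w! τ) ≤ pf ω r (w! τ) := hwitτ pstar hpstar r hrL hrτ
          nlinarith
        · rw [h, zero_mul]
        · have hrτ : r ∈ τ := by rw [hτ, Finset.mem_filter]; exact ⟨hrL, h⟩
          have hle := hmax r hrτ
          nlinarith
      have hx := hposum (w! τ) hwK
      rw [hcrepr] at hx
      have hdecomp : ∑ r ∈ L, c r * pf ω r (w! τ)
          = (∑ r ∈ L, c r * (pf ω r (w! τ) - pf ω pstar (w! τ)))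
            + (∑ r ∈ L, c r) * pf ω pstar (w! τ) := by
        rw [Finset.sum_mul, ← Finset.sum_add_distrib]
        exact Finset.sum_congr rfl fun r _ => by ring
      rw [hdecomp, hcsum, zero_mul, add_zero] at hx
      linarith [Finset.sum_nonpos key]
  rw [Set.not_disjoint_iff] at hmain
  obtain ⟨z, hz1, hz2⟩ := hmain
  obtain ⟨x, hxK, rfl⟩ := hz1
  refine ⟨x, hxK, ?_⟩
  intro p hp q hq
  simp only [hOrt, Set.mem_setOf_eq] at hz2
  have := hz2 ((⟨p, hp⟩ : {p // p ∈ σ}), (⟨q, hq⟩ : {q // q ∈ L}))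
  simp only [hΦ] at this
  linarith

/-- de Silva's theorem (weighted version): if every face of `σ` has an `ω`-witness in `W`,
then `σ` is a weighted Delaunay simplex; moreover `Vor_ω(σ)` meets the convex hull of the
`ω`-witnesses of `σ` and of its subsimplices. -/
theorem witness_implies_delaunay
    (d : ℕ) (L : Finset (EuclideanSpace ℝ (Fin d))) (W : Set (EuclideanSpace ℝ (Fin d)))
    (ω : EuclideanSpace ℝ (Fin d) → ℝ) (hω : ∀ q ∈ L, 0 ≤ ω q)
    (σ : Finset (EuclideanSpace ℝ (Fin d))) (hσL : σ ⊆ L) (hσne : σ.Nonempty)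
    (hwit : ∀ τ : Finset (EuclideanSpace ℝ (Fin d)), τ ⊆ σ → τ.Nonempty →
      ∃ w ∈ W, isWitness L ω w τ) :
    (vorFace L ω σ).Nonempty ∧
    (vorFace L ω σ ∩ convexHull ℝ
      {w | w ∈ W ∧ ∃ τ : Finset (EuclideanSpace ℝ (Fin d)), τ ⊆ σ ∧ τ.Nonempty ∧
        isWitness L ω w τ}).Nonempty := by
  classical
  have hch : ∀ τ : Finset (EuclideanSpace ℝ (Fin d)),
      ∃ w, (τ ⊆ σ → τ.Nonempty → w ∈ W ∧ isWitness L ω w τ) := by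
    intro τ
    by_cases h : τ ⊆ σ ∧ τ.Nonempty
    · obtain ⟨w, hw1, hw2⟩ := hwit τ h.1 h.2
      exact ⟨w, fun _ _ => ⟨hw1, hw2⟩⟩
    · exact ⟨0, fun h1 h2 => absurd ⟨h1, h2⟩ h⟩
  choose w! hw! using hch
  obtain ⟨x, hxK, hx⟩ := aux_main d L ω σ hσL hσne w! (fun τ h1 h2 => (hw! τ h1 h2).2)
  have hxVor : x ∈ vorFace L ω σ := by
    simp only [vorFace, Set.mem_iInter, vorCell, Set.mem_setOf_eq]
    intro p hp q hq
    exact hx p hp q hq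
  have hsub : (w! '' {τ : Finset (EuclideanSpace ℝ (Fin d)) | τ ⊆ σ ∧ τ.Nonempty}) ⊆
      {w | w ∈ W ∧ ∃ τ : Finset (EuclideanSpace ℝ (Fin d)), τ ⊆ σ ∧ τ.Nonempty ∧
        isWitness L ω w τ} := by
    rintro z ⟨τ, ⟨h1, h2⟩, rfl⟩
    exact ⟨(hw! τ h1 h2).1, τ, h1, h2, (hw! τ h1 h2).2⟩
  have hxhull := convexHull_mono hsub hxK
  exact ⟨⟨x, hxVor⟩, ⟨x, hxVor, hxhull⟩⟩
end
end
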